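/- For all real parameters 0 < n₁ ≤ n₂ and every y ≥ 0 one has φ̃_{n₁}(y) ≤ φ̃_{n₂}(y); that is, for each fixed y the value φ̃_n(y) is nondecreasing as a function of n. -/
import Mathlib


/-- `C_n = e(1+n)² − 1`. -/
noncomputable def Cn (n : ℝ) : ℝ := Real.exp 1 * (1 + n) ^ 2 - 1

/-- The cut-off function `φ̃_n` of the Mellet–Vasseur argument (Lemma 4.2 of the paper). -/
noncomputable def phiTilde (n y : ℝ) : ℝ :=
  if y ≤ n then (1 + y) * Real.log (1 + y)
  else if y ≤ Cn n then
    2 * (1 + Real.log (1 + n)) * y - (1 + y) * Real.log (1 + y)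
      + 2 * (Real.log (1 + n) - n)
  else Real.exp 1 * (1 + n) ^ 2 - 2 * n - 2

/-- The derivative `φ̃_n'` of the cut-off function `φ̃_n`. -/
noncomputable def Dn (n y : ℝ) : ℝ :=
  if y ≤ n then 1 + Real.log (1 + y)
  else if y ≤ Cn n then 2 * (1 + Real.log (1 + n)) - 1 - Real.log (1 + y)
  else 0

/-- The second derivative `φ̃_n''` of the cut-off function `φ̃_n`
(away from the junction points `y = n`, `y = C_n`). -/
noncomputable def phi2 (n y : ℝ) : ℝ :=
  if y < n then 1 / (1 + y)
  else if y < Cn n then -(1 / (1 + y))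
  else 0

/-- Workhorse inequality: `v (log u − log v) ≤ u − v` for positive `u, v`. -/
lemma key_log (u v : ℝ) (hu : 0 < u) (hv : 0 < v) :
    v * Real.log u - v * Real.log v ≤ u - v := by
  have h := Real.log_le_sub_one_of_pos (div_pos hu hv)
  rw [Real.log_div (ne_of_gt hu) (ne_of_gt hv)] at h
  have h2 := mul_le_mul_of_nonneg_left h (le_of_lt hv)
  have h3 : v * (u / v) = u := by field_simp
  nlinarith

lemma logC (n : ℝ) (hn : 0 < n) :
    Real.log (1 + Cn n) = 1 + 2 * Real.log (1 + n) := by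
  have h1 : (1 : ℝ) + Cn n = Real.exp 1 * (1 + n) ^ 2 := by unfold Cn; ring
  rw [h1, Real.log_mul (Real.exp_ne_zero 1) (by positivity), Real.log_exp,
    Real.log_pow]
  push_cast; ring

/-- Convexity tangent-line lower bound for `f(y) = (1+y) log(1+y)`. -/
lemma f_lower (n y : ℝ) (hn : 0 ≤ n) (hny : n ≤ y) :
    (1 + n) * Real.log (1 + n) + (1 + Real.log (1 + n)) * (y - n)
      ≤ (1 + y) * Real.log (1 + y) := by
  have h := key_log (1 + n) (1 + y) (by linarith) (by linarith)
  nlinarith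

/-- Chord-below-tangent upper bound for `f(y) = (1+y) log(1+y)`. -/
lemma f_upper (a y : ℝ) (ha : 0 ≤ a) (hay : a ≤ y) :
    (1 + y) * Real.log (1 + y) - (1 + a) * Real.log (1 + a)
      ≤ (1 + Real.log (1 + y)) * (y - a) := by
  have h := key_log (1 + y) (1 + a) (by linarith) (by linarith)
  nlinarith

lemma f_mono (a b : ℝ) (ha : 0 ≤ a) (hab : a ≤ b) :
    (1 + a) * Real.log (1 + a) ≤ (1 + b) * Real.log (1 + b) := by
  have h := f_lower a b ha hab
  have h2 : (0 : ℝ) ≤ Real.log (1 + a) := Real.log_nonneg (by linarith)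
  nlinarith

/-- The middle-branch value `g_n(y)` is nondecreasing in `n` (for `y ≥ n₂`). -/
lemma g_mono_n (n₁ n₂ y : ℝ) (h1 : 0 < n₁) (h : n₁ ≤ n₂) (hy : n₂ ≤ y) :
    2 * (1 + Real.log (1 + n₁)) * y - (1 + y) * Real.log (1 + y)
        + 2 * (Real.log (1 + n₁) - n₁)
      ≤ 2 * (1 + Real.log (1 + n₂)) * y - (1 + y) * Real.log (1 + y)
        + 2 * (Real.log (1 + n₂) - n₂) := by
  have hk := key_log (1 + n₁) (1 + n₂) (by linarith) (by linarith)
  have hl : Real.log (1 + n₁) ≤ Real.log (1 + n₂) :=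
    Real.log_le_log (by linarith) (by linarith)
  nlinarith

/-- On `[n, C_n]` the middle branch `g_n` is bounded below by its left values. -/
lemma g_ge_left (n a y : ℝ) (hn : 0 < n) (hna : n ≤ a) (hay : a ≤ y)
    (hyC : y ≤ Cn n) :
    2 * (1 + Real.log (1 + n)) * a - (1 + a) * Real.log (1 + a)
        + 2 * (Real.log (1 + n) - n)
      ≤ 2 * (1 + Real.log (1 + n)) * y - (1 + y) * Real.log (1 + y)
        + 2 * (Real.log (1 + n) - n) := by
  have hfu := f_upper a y (by linarith) hay
  have hlog : Real.log (1 + y) ≤ 1 + 2 * Real.log (1 + n) := by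
    rw [← logC n hn]
    exact Real.log_le_log (by linarith) (by linarith)
  have hmul := mul_le_mul_of_nonneg_right
    (show 1 + Real.log (1 + y) ≤ 2 * (1 + Real.log (1 + n)) by linarith)
    (show (0 : ℝ) ≤ y - a by linarith)
  nlinarith

/-- The constant value `c_n` equals `g_n(C_n)`. -/
lemma g_at_C (n : ℝ) (hn : 0 < n) :
    2 * (1 + Real.log (1 + n)) * Cn n - (1 + Cn n) * Real.log (1 + Cn n)
        + 2 * (Real.log (1 + n) - n)
      = Real.exp 1 * (1 + n) ^ 2 - 2 * n - 2 := by
  rw [logC n hn]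
  unfold Cn
  ring

/-- `c_n ≤ f(C_n)`. -/
lemma c_le_fC (n : ℝ) (hn : 0 < n) :
    Real.exp 1 * (1 + n) ^ 2 - 2 * n - 2 ≤ (1 + Cn n) * Real.log (1 + Cn n) := by
  rw [logC n hn]
  have h1 : (0 : ℝ) ≤ Real.log (1 + n) := Real.log_nonneg (by linarith)
  have h2 : (0 : ℝ) < Real.exp 1 * (1 + n) ^ 2 := by positivity
  unfold Cn
  nlinarith

/-- `φ̃_n(y) ≤ (1+y) log(1+y)` for all `y ≥ 0`. -/
lemma phi_le_f (n y : ℝ) (hn : 0 < n) (hy : 0 ≤ y) :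
    phiTilde n y ≤ (1 + y) * Real.log (1 + y) := by
  have hE : (2 : ℝ) ≤ Real.exp 1 := by
    have := Real.add_one_le_exp 1; linarith
  have hCn : n < Cn n := by unfold Cn; nlinarith
  unfold phiTilde
  split_ifs with h1 h2
  · exact le_refl _
  · have h := f_lower n y hn.le (le_of_not_ge h1)
    nlinarith
  · have h3 := c_le_fC n hn
    have h4 := f_mono (Cn n) y (by linarith) (by linarith [not_le.1 h2])
    linarith

/-- For fixed `y ≥ 0`, `φ̃_n(y)` is nondecreasing in the parameter `n`. -/
theorem phiTilde_monotone_in_n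
    (n₁ n₂ : ℝ) (hn₁ : 0 < n₁) (hn : n₁ ≤ n₂) (y : ℝ) (hy : 0 ≤ y) :
    phiTilde n₁ y ≤ phiTilde n₂ y := by
  have hE : (2 : ℝ) ≤ Real.exp 1 := by
    have := Real.add_one_le_exp 1; linarith
  have hn₂ : 0 < n₂ := lt_of_lt_of_le hn₁ hn
  have hCn1 : n₁ < Cn n₁ := by unfold Cn; nlinarith
  have hCn2 : n₂ < Cn n₂ := by unfold Cn; nlinarith
  have hCC : Cn n₁ ≤ Cn n₂ := by
    unfold Cn
    have hdelta : (0:ℝ) ≤ (1 + n₂) ^ 2 - (1 + n₁) ^ 2 := by nlinarith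
    have hkey := mul_le_mul_of_nonneg_right hE hdelta
    nlinarith
  rcases le_or_gt y n₂ with h | h
  · have e2 : phiTilde n₂ y = (1 + y) * Real.log (1 + y) := by
      unfold phiTilde; rw [if_pos h]
    rw [e2]
    exact phi_le_f n₁ y hn₁ hy
  · have hy1 : ¬ y ≤ n₁ := by push_neg; linarith
    have hy2 : ¬ y ≤ n₂ := by push_neg; exact h
    rcases le_or_gt y (Cn n₂) with h2 | h2
    · -- φ̃_{n₂}(y) is the middle branch g₂(y)
      have e2 : phiTilde n₂ y
          = 2 * (1 + Real.log (1 + n₂)) * y - (1 + y) * Real.log (1 + y)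
              + 2 * (Real.log (1 + n₂) - n₂) := by
        unfold phiTilde; rw [if_neg hy2, if_pos h2]
      rcases le_or_gt y (Cn n₁) with h3 | h3
      · have e1 : phiTilde n₁ y
            = 2 * (1 + Real.log (1 + n₁)) * y - (1 + y) * Real.log (1 + y)
                + 2 * (Real.log (1 + n₁) - n₁) := by
          unfold phiTilde; rw [if_neg hy1, if_pos h3]
        rw [e1, e2]
        exact g_mono_n n₁ n₂ y hn₁ hn h.le
      · -- φ̃_{n₁}(y) is the constant c₁
        have e1 : phiTilde n₁ y = Real.exp 1 * (1 + n₁) ^ 2 - 2 * n₁ - 2 := by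
          unfold phiTilde; rw [if_neg hy1, if_neg (not_le.2 h3)]
        rw [e1, e2]
        set a : ℝ := max n₂ (Cn n₁) with ha
        have hay : a ≤ y := max_le h.le h3.le
        have hn2a : n₂ ≤ a := le_max_left _ _
        have step1 := g_ge_left n₂ a y hn₂ hn2a hay h2
        have step2 : Real.exp 1 * (1 + n₁) ^ 2 - 2 * n₁ - 2
            ≤ 2 * (1 + Real.log (1 + n₂)) * a - (1 + a) * Real.log (1 + a)
                + 2 * (Real.log (1 + n₂) - n₂) := by
          rcases le_or_gt n₂ (Cn n₁) with h4 | h4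
          · have haC : a = Cn n₁ := max_eq_right h4
            rw [haC]
            have := g_mono_n n₁ n₂ (Cn n₁) hn₁ hn h4
            have hc := g_at_C n₁ hn₁
            linarith
          · have haC : a = n₂ := max_eq_left h4.le
            rw [haC]
            have hgn : 2 * (1 + Real.log (1 + n₂)) * n₂
                  - (1 + n₂) * Real.log (1 + n₂)
                  + 2 * (Real.log (1 + n₂) - n₂)
                = (1 + n₂) * Real.log (1 + n₂) := by ring
            rw [hgn]
            have hc := c_le_fC n₁ hn₁
            have hm := f_mono (Cn n₁) n₂ (by linarith) h4.le
            linarith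
        linarith
    · -- both are constants
      have e1 : phiTilde n₁ y = Real.exp 1 * (1 + n₁) ^ 2 - 2 * n₁ - 2 := by
        unfold phiTilde
        rw [if_neg hy1, if_neg (by push_neg; linarith : ¬ y ≤ Cn n₁)]
      have e2 : phiTilde n₂ y = Real.exp 1 * (1 + n₂) ^ 2 - 2 * n₂ - 2 := by
        unfold phiTilde; rw [if_neg hy2, if_neg (not_le.2 h2)]
      rw [e1, e2]
      have hdelta : (0:ℝ) ≤ (1 + n₂) ^ 2 - (1 + n₁) ^ 2 := by nlinarith
      have hkey := mul_le_mul_of_nonneg_right hE hdelta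
      nlinarith
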